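/- Assume n ≠ 2p. If L is a 2×2 complex matrix such that for every integer w ≥ 0 there exists a 2×2 complex matrix Λ_w with P_w(x)·L = Λ_w·P_w(x) for all real x, then L = c·Id for some complex number c; that is, every differential operator of order zero having the polynomials P_w as eigenfunctions is a scalar multiple of the identity. -/

import Mathlib

open scoped BigOperators Matrix

noncomputable section

/-- Gegenbauer polynomials `C_k^lam` with natural number index, defined by the
three-term recurrence. -/
def Geg (lam : ℝ) : ℕ → ℝ → ℝ
  | 0 => fun _ => 1
  | 1 => fun x => 2 * lam * x
  | (k + 2) => fun x =>
      (2 * ((k : ℝ) + 2 + lam - 1) * x * Geg lam (k + 1) x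
        - ((k : ℝ) + 2 + 2 * lam - 2) * Geg lam k x) / ((k : ℝ) + 2)

/-- Gegenbauer polynomials with integer index, equal to `0` for negative index. -/
def GegZ (lam : ℝ) (k : ℤ) (x : ℝ) : ℝ :=
  if k < 0 then 0 else Geg lam k.toNat x

/-- The 2×2 matrix valued polynomials `P_w`. -/
def Pw (p n : ℝ) (w : ℕ) (x : ℝ) : Matrix (Fin 2) (Fin 2) ℂ :=
  !![(((1 / (n + 1)) * GegZ ((n + 1) / 2) (w : ℤ) x
        + (1 / (p + w)) * GegZ ((n + 3) / 2) ((w : ℤ) - 2) x : ℝ) : ℂ),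
     (((1 / (p + w)) * GegZ ((n + 3) / 2) ((w : ℤ) - 1) x : ℝ) : ℂ);
     (((1 / (n - p + w)) * GegZ ((n + 3) / 2) ((w : ℤ) - 1) x : ℝ) : ℂ),
     (((1 / (n + 1)) * GegZ ((n + 1) / 2) (w : ℤ) x
        + (1 / (n - p + w)) * GegZ ((n + 3) / 2) ((w : ℤ) - 2) x : ℝ) : ℂ)]

/-- The weight matrix `W_{p,n}` on `(-1,1)`. -/
def Wmat (p n : ℝ) (x : ℝ) : Matrix (Fin 2) (Fin 2) ℂ :=
  (((1 - x ^ 2) ^ (n / 2 - 1) : ℝ) : ℂ) •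
    !![((p * x ^ 2 + n - p : ℝ) : ℂ), ((-(n * x) : ℝ) : ℂ);
       ((-(n * x) : ℝ) : ℂ), (((n - p) * x ^ 2 + p : ℝ) : ℂ)]

/-- Entrywise derivative of a matrix valued function. -/
def mderiv (P : ℝ → Matrix (Fin 2) (Fin 2) ℂ) : ℝ → Matrix (Fin 2) (Fin 2) ℂ :=
  fun x => Matrix.of fun i j => deriv (fun t => P t i j) x

/-- The matrix valued inner product `⟨P,Q⟩ = ∫_{-1}^{1} P(x) W(x) Q(x)^* dx`. -/
def mint (p n : ℝ) (P Q : ℝ → Matrix (Fin 2) (Fin 2) ℂ) : Matrix (Fin 2) (Fin 2) ℂ :=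
  Matrix.of fun i j => ∫ x in (-1 : ℝ)..1, (P x * Wmat p n x * (Q x)ᴴ) i j

/-- A matrix valued function is polynomial if each entry is given by a polynomial. -/
def IsPolyMat (P : ℝ → Matrix (Fin 2) (Fin 2) ℂ) : Prop :=
  ∀ i j, ∃ q : Polynomial ℂ, ∀ x : ℝ, P x i j = q.eval (x : ℂ)


/-- for `n ≠ 2p`, every order-zero operator having the `P_w` as
eigenfunctions is a scalar multiple of the identity. -/
lemma geg2 (lam x : ℝ) : Geg lam 2 x = 2*lam*(lam+1)*x^2 - lam := by
  show Geg lam (0+2) x = _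
  rw [Geg]; simp [Geg]; ring

lemma pw2 (p n x : ℝ) (hn1 : n + 1 ≠ 0) :
    Pw p n 2 x =
      !![((n:ℂ)+3)/2*(x:ℂ)^2 - 1/2 + ((p:ℂ)+2)⁻¹, ((n:ℂ)+3)*(x:ℂ)/((p:ℂ)+2);
         ((n:ℂ)+3)*(x:ℂ)/((n:ℂ)-(p:ℂ)+2), ((n:ℂ)+3)/2*(x:ℂ)^2 - 1/2 + ((n:ℂ)-(p:ℂ)+2)⁻¹] := by
  have hn1' : ((n:ℂ)) + 1 ≠ 0 := by exact_mod_cast hn1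
  unfold Pw
  ext i j
  fin_cases i <;> fin_cases j <;> norm_num [GegZ, geg2, Geg, show Int.toNat 2 = 2 from rfl] <;> field_simp <;> ring

set_option maxHeartbeats 2000000 in
theorem statement11 (p n : ℝ) (hp : 0 < p) (hpn : p < n) (hn : n ≠ 2 * p)
    (L : Matrix (Fin 2) (Fin 2) ℂ)
    (hL : ∀ w : ℕ, ∃ Λ : Matrix (Fin 2) (Fin 2) ℂ, ∀ x : ℝ,
      Pw p n w x * L = Λ * Pw p n w x) :
    ∃ c : ℂ, L = c • (1 : Matrix (Fin 2) (Fin 2) ℂ) := by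
  have hn1 : n + 1 ≠ 0 := by linarith
  obtain ⟨Λ, h⟩ := hL 2
  have h' : ∀ x : ℝ,
      (!![((n:ℂ)+3)/2*(x:ℂ)^2 - 1/2 + ((p:ℂ)+2)⁻¹, ((n:ℂ)+3)*(x:ℂ)/((p:ℂ)+2);
         ((n:ℂ)+3)*(x:ℂ)/((n:ℂ)-(p:ℂ)+2), ((n:ℂ)+3)/2*(x:ℂ)^2 - 1/2 + ((n:ℂ)-(p:ℂ)+2)⁻¹]) * L
      = Λ * (!![((n:ℂ)+3)/2*(x:ℂ)^2 - 1/2 + ((p:ℂ)+2)⁻¹, ((n:ℂ)+3)*(x:ℂ)/((p:ℂ)+2);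
         ((n:ℂ)+3)*(x:ℂ)/((n:ℂ)-(p:ℂ)+2), ((n:ℂ)+3)/2*(x:ℂ)^2 - 1/2 + ((n:ℂ)-(p:ℂ)+2)⁻¹]) := by
    intro x
    have hx := h x
    rw [pw2 p n x hn1] at hx
    exact hx
  -- scalar equation extraction
  have ent : ∀ (x : ℝ) (i j : Fin 2), True := fun _ _ _ => trivial
  clear ent
  have t00 := congrFun (congrFun (h' 0) 0) 0
  have t04 := congrFun (congrFun (h' 0) 1) 1
  have t02 := congrFun (congrFun (h' 0) 0) 1
  have t03 := congrFun (congrFun (h' 0) 1) 0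
  have u02 := congrFun (congrFun (h' 1) 0) 1
  have u03 := congrFun (congrFun (h' 1) 1) 0
  have v02 := congrFun (congrFun (h' (-1)) 0) 1
  have v03 := congrFun (congrFun (h' (-1)) 1) 0
  norm_num [Matrix.mul_apply, Fin.sum_univ_two] at t00 t04 t02 t03 u02 u03 v02 v03
  -- nonzero constants
  have hp2 : ((p:ℂ) + 2) ≠ 0 := by
    have : (p:ℝ) + 2 ≠ 0 := by linarith
    exact_mod_cast this
  have hnp2 : ((n:ℂ) - (p:ℂ) + 2) ≠ 0 := by
    have : (n:ℝ) - p + 2 ≠ 0 := by linarith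
    exact_mod_cast this
  have hn3 : ((n:ℂ) + 3) ≠ 0 := by
    have : (n:ℝ) + 3 ≠ 0 := by linarith
    exact_mod_cast this
  have hA : (-(1:ℂ)/2 + ((p:ℂ)+2)⁻¹) ≠ 0 := by
    have hr : (-(1:ℝ)/2 + (p+2)⁻¹) ≠ 0 := by
      have h2 : (0:ℝ) < p + 2 := by linarith
      intro hcon
      have : (p:ℝ) + 2 = 2 := by
        field_simp at hcon
        linarith
      linarith
    exact_mod_cast hr
  have hB : (-(1:ℂ)/2 + ((n:ℂ)-(p:ℂ)+2)⁻¹) ≠ 0 := by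
    have hr : (-(1:ℝ)/2 + (n-p+2)⁻¹) ≠ 0 := by
      have h2 : (0:ℝ) < n - p + 2 := by linarith
      intro hcon
      have : (n:ℝ) - p + 2 = 2 := by
        field_simp at hcon
        linarith
      linarith
    exact_mod_cast hr
  have hAB : (((p:ℂ)+2)⁻¹ - ((n:ℂ)-(p:ℂ)+2)⁻¹) ≠ 0 := by
    have hr : (((p:ℝ)+2)⁻¹ - ((n:ℝ)-p+2)⁻¹) ≠ 0 := by
      intro hcon
      have hne : (p:ℝ) + 2 ≠ n - p + 2 := by
        intro e; apply hn; linarith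
      apply hne
      have := sub_eq_zero.mp hcon
      have h1 : (0:ℝ) < p + 2 := by linarith
      have h2 : (0:ℝ) < n - p + 2 := by linarith
      exact inv_injective this
    exact_mod_cast hr
  have hg : ((n:ℂ)+3)/((p:ℂ)+2) ≠ 0 := div_ne_zero hn3 hp2
  have hG : ((n:ℂ)+3)/2 ≠ 0 := div_ne_zero hn3 two_ne_zero
  -- deductions
  have hΛ00 : L 0 0 = Λ 0 0 := mul_left_cancel₀ hA (by linear_combination t00)
  have hΛ11 : L 1 1 = Λ 1 1 := mul_left_cancel₀ hB (by linear_combination t04)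
  have h1100 : L 1 1 = Λ 0 0 :=
    mul_left_cancel₀ hg (by linear_combination (u02 - v02)/2)
  have hdiag : L 1 1 = L 0 0 := h1100.trans hΛ00.symm
  have hΛ01 : L 0 1 = Λ 0 1 :=
    mul_left_cancel₀ hG (by linear_combination (u02 + v02)/2 - t02)
  have hL01 : L 0 1 = 0 := by
    have hz : (((p:ℂ)+2)⁻¹ - ((n:ℂ)-(p:ℂ)+2)⁻¹) * L 0 1 = 0 := by
      linear_combination t02 - (-(1:ℂ)/2 + ((n:ℂ)-(p:ℂ)+2)⁻¹) * hΛ01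
    exact (mul_eq_zero.mp hz).resolve_left hAB
  have hΛ10 : L 1 0 = Λ 1 0 :=
    mul_left_cancel₀ hG (by linear_combination (u03 + v03)/2 - t03)
  have hL10 : L 1 0 = 0 := by
    have hz : (((n:ℂ)-(p:ℂ)+2)⁻¹ - ((p:ℂ)+2)⁻¹) * L 1 0 = 0 := by
      linear_combination t03 - (-(1:ℂ)/2 + ((p:ℂ)+2)⁻¹) * hΛ10
    have hBA : (((n:ℂ)-(p:ℂ)+2)⁻¹ - ((p:ℂ)+2)⁻¹) ≠ 0 := by
      intro e; apply hAB; linear_combination -e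
    exact (mul_eq_zero.mp hz).resolve_left hBA
  refine ⟨L 0 0, ?_⟩
  ext i j
  fin_cases i <;> fin_cases j <;>
    simp [Matrix.one_apply, hL01, hL10, hdiag]

end
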